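/- Let v be a discrete valuation on a field K, Φ a self-map of ℙ¹(K) with δ_v(Φ(P),Φ(Q)) ≥ δ_v(P,Q) and satisfying the ultrametric triangle inequality for δ_v, and let Q₀ = [0:1] be a fixed point of Φ. Let (Q_{-m},…,Q₀) be an orbit segment with Q_i = [x_i:y_i], min(v(x_i),v(y_i)) = 0. Then for all -m ≤ j < i ≤ 0, v(x_j y_i - x_i y_j) ≥ v(x_j); equivalently, x_j 'divides' x_j y_i - x_i y_j at v. -/

import Mathlib

/-- The `v`-adic logarithmic distance between two points of `ℙ¹(K)` given in homogeneous
coordinates: `δ_v(P,Q) = v(x₁y₂ - x₂y₁) - min(v x₁, v y₁) - min(v x₂, v y₂)`. -/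
noncomputable def logDist {K : Type*} [Field K] (v : K → WithTop ℤ) (P Q : K × K) : WithTop ℤ :=
  v (P.1 * Q.2 - Q.1 * P.2) - min (v P.1) (v P.2) - min (v Q.1) (v Q.2)

/-- Along an orbit segment `Q_0, …, Q_m` (with `Q_m = [0:1]` a fixed point of the
non-expanding map `Φ`) in `v`-coprime coordinates, for `j < i ≤ m` one has
`v(x_j y_i - x_i y_j) ≥ v(x_j)`, i.e. `x_j` divides `x_j y_i - x_i y_j` at `v`. -/
theorem orbit_cross_dvd {K : Type*} [Field K] (v : K → WithTop ℤ)
    (hv0 : ∀ x : K, v x = ⊤ ↔ x = 0)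
    (hvmul : ∀ x y : K, v (x * y) = v x + v y)
    (hvadd : ∀ x y : K, min (v x) (v y) ≤ v (x + y))
    (hvsurj : ∀ n : ℤ, ∃ x : K, v x = (n : WithTop ℤ))
    (Φ : K × K → K × K)
    (hexp : ∀ P Q : K × K, logDist v P Q ≤ logDist v (Φ P) (Φ Q))
    (m : ℕ) (P : ℕ → K × K)
    (horb : ∀ i : ℕ, i < m → P (i + 1) = Φ (P i))
    (hfix : Φ (P m) = P m) (hQ0 : P m = (0, 1))
    (hcop : ∀ i : ℕ, i ≤ m → min (v (P i).1) (v (P i).2) = 0) :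
    ∀ i j : ℕ, j < i → i ≤ m → v (P j).1 ≤ v ((P j).1 * (P i).2 - (P i).1 * (P j).2) := by
  -- basic facts about v
  have hself : ∀ a : WithTop ℤ, a + a = 0 → a = 0 := by
    intro a h
    induction a using WithTop.recTopCoe with
    | top => simp at h
    | coe n => norm_cast at h ⊢; omega
  have hv1 : v 1 = 0 := by
    have h := hvmul 1 1
    rw [one_mul] at h
    have hne : v 1 ≠ ⊤ := by simp [hv0]
    obtain ⟨n, hn⟩ := WithTop.ne_top_iff_exists.mp hne
    rw [← hn] at h ⊢
    norm_cast at h ⊢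
    omega
  have hvneg1 : v (-1) = 0 := by
    have h := hvmul (-1) (-1)
    rw [neg_mul_neg, one_mul, hv1] at h
    exact hself _ h.symm
  have hvneg : ∀ x : K, v (-x) = v x := by
    intro x
    have : (-x) = (-1) * x := by ring
    rw [this, hvmul, hvneg1, zero_add]
  have hvzero : v (0 : K) = ⊤ := (hv0 0).2 rfl
  -- the logDist to the fixed point Q₀ = P m is just v of the first coordinate
  have hld : ∀ j : ℕ, j ≤ m → logDist v (P j) (P m) = v (P j).1 := by
    intro j hj
    unfold logDist
    rw [hQ0]
    simp only [mul_one, zero_mul, sub_zero, hcop j hj, hvzero, hv1]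
    simp
  -- monotonicity of v x along the orbit
  have hmono : ∀ i : ℕ, i ≤ m → ∀ j : ℕ, j ≤ i → v (P j).1 ≤ v (P i).1 := by
    intro i hi
    induction i with
    | zero => intro j hj; interval_cases j; exact le_refl _
    | succ n ih =>
      intro j hj
      rcases Nat.lt_or_ge j (n + 1) with h | h
      · have hjn : j ≤ n := Nat.lt_succ_iff.mp h
        have hstep : v (P n).1 ≤ v (P (n + 1)).1 := by
          have h1 := hexp (P n) (P m)
          rw [hfix, ← horb n (by omega)] at h1
          rw [hld n (by omega), hld (n + 1) hi] at h1
          exact h1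
        exact le_trans (ih (by omega) j hjn) hstep
      · have : j = n + 1 := by omega
        subst this; exact le_refl _
  -- conclude with the ultrametric inequality
  intro i j hji hi
  have hxji : v (P j).1 ≤ v (P i).1 := hmono i hi j (le_of_lt hji)
  have hyi : (0 : WithTop ℤ) ≤ v (P i).2 := by
    have := hcop i hi; rw [← this]; exact min_le_right _ _
  have hyj : (0 : WithTop ℤ) ≤ v (P j).2 := by
    have := hcop j (by omega); rw [← this]; exact min_le_right _ _
  have h1 : v (P j).1 ≤ v ((P j).1 * (P i).2) := by
    rw [hvmul]
    calc v (P j).1 = v (P j).1 + 0 := by rw [add_zero]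
    _ ≤ v (P j).1 + v (P i).2 := add_le_add_right hyi _
  have h2 : v (P j).1 ≤ v (-((P i).1 * (P j).2)) := by
    rw [hvneg, hvmul]
    calc v (P j).1 ≤ v (P i).1 := hxji
    _ = v (P i).1 + 0 := by rw [add_zero]
    _ ≤ v (P i).1 + v (P j).2 := add_le_add_right hyj _
  have := hvadd ((P j).1 * (P i).2) (-((P i).1 * (P j).2))
  rw [← sub_eq_add_neg] at this
  exact le_trans (le_min h1 h2) this
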